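/- Consider the diagonal discrete SSM over ℝ^N with recurrence h_l = exp(Δ_l A) h_{l-1} + (Δ_l A)^{-1}(exp(Δ_l A) - I) Δ_l x_l where A is a diagonal matrix with nonzero diagonal entries A_jj = α_j. Let h_L be the final state using all inputs x_m,...,x_L and h_L^m the final state obtained by removing the m-th step. Then for each component j, (h_L - h_L^m)_j = exp(α_j Σ_{i=1}^{L-m} Δ_{m+i}) (exp(α_j Δ_m) - 1) ((h_{m-1})_j + (x_m)_j / α_j); in particular, if the vector with components c_j = α_j exp(α_j Σ_{i=1}^{L-m} Δ_{m+i}) ((h_{m-1})_j + (x_m)_j / α_j) is nonzero, then ‖h_L - h_L^m‖ ~ ‖c‖ · Δ_m as Δ_m → 0⁺. -/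

import Mathlib

open Finset Filter Topology

/-- diagonal discrete SSM over ℝ^N. Componentwise closed form of
    the difference `h_L - h_L^m`, and the asymptotic `‖h_L - h_L^m‖ ~ ‖c‖ Δ_m`
    as `Δ_m → 0⁺` when `c ≠ 0`. The state `s d l` is parameterized by
    `d = Δ_m`, the time interval used at step `m`. -/
theorem diagonal_ssm_removed_step
    (N : ℕ) (α : Fin N → ℝ) (hα : ∀ j, α j ≠ 0)
    (Δ : ℕ → ℝ) (hΔ : ∀ l, 0 < Δ l) (x : ℕ → Fin N → ℝ)
    (m L : ℕ) (hm : 1 ≤ m) (hmL : m ≤ L)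
    (h0 : Fin N → ℝ)
    (s : ℝ → ℕ → Fin N → ℝ) (s' : ℕ → Fin N → ℝ)
    (hinit : ∀ d, s d (m - 1) = h0)
    (hstepm : ∀ d j, s d m j =
      Real.exp (α j * d) * h0 j + (Real.exp (α j * d) - 1) / α j * x m j)
    (hrec : ∀ d l, m + 1 ≤ l → l ≤ L → ∀ j,
      s d l j = Real.exp (α j * Δ l) * s d (l - 1) j +
        (Real.exp (α j * Δ l) - 1) / α j * x l j)
    (hinit' : s' m = h0)
    (hrec' : ∀ l, m + 1 ≤ l → l ≤ L → ∀ j,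
      s' l j = Real.exp (α j * Δ l) * s' (l - 1) j +
        (Real.exp (α j * Δ l) - 1) / α j * x l j) :
    (∀ d j, s d L j - s' L j =
        Real.exp (α j * ∑ i ∈ Finset.Icc 1 (L - m), Δ (m + i)) *
          (Real.exp (α j * d) - 1) * (h0 j + x m j / α j)) ∧
    (∀ (c v : ℝ → EuclideanSpace ℝ (Fin N)),
      (∀ d j, c d j =
        α j * Real.exp (α j * ∑ i ∈ Finset.Icc 1 (L - m), Δ (m + i)) *
          (h0 j + x m j / α j)) →
      (∀ d j, v d j = s d L j - s' L j) →
      c 0 ≠ 0 →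
      Tendsto (fun d : ℝ => ‖v d‖ / (‖c 0‖ * d)) (𝓝[>] (0 : ℝ)) (𝓝 1)) := by
  have key : ∀ l, m ≤ l → l ≤ L → ∀ d j,
      s d l j - s' l j =
        Real.exp (α j * ∑ i ∈ Finset.Icc 1 (l - m), Δ (m + i)) *
          (Real.exp (α j * d) - 1) * (h0 j + x m j / α j) := by
    intro l hl
    induction l, hl using Nat.le_induction with
    | base =>
      intro _ d j
      have he : (Finset.Icc 1 (m - m)) = (∅ : Finset ℕ) := by
        rw [Nat.sub_self]; exact Finset.Icc_eq_empty (by omega)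
      rw [hstepm d j, hinit', he]
      simp only [Finset.sum_empty, mul_zero, Real.exp_zero]
      field_simp
      ring
    | succ l hl ih =>
      intro hlL d j
      have h1 : m + 1 ≤ l + 1 := by omega
      have e1 := hrec d (l + 1) h1 hlL j
      have e2 := hrec' (l + 1) h1 hlL j
      simp only [Nat.add_sub_cancel] at e1 e2
      rw [e1, e2]
      have hsum : (∑ i ∈ Finset.Icc 1 (l + 1 - m), Δ (m + i)) =
          (∑ i ∈ Finset.Icc 1 (l - m), Δ (m + i)) + Δ (l + 1) := by
        have h3 : l + 1 - m = (l - m) + 1 := by omega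
        rw [h3, Finset.sum_Icc_succ_top (by omega : 1 ≤ l - m + 1)]
        congr 2
        omega
      rw [hsum, show α j * ((∑ i ∈ Finset.Icc 1 (l - m), Δ (m + i)) + Δ (l + 1)) =
          α j * (∑ i ∈ Finset.Icc 1 (l - m), Δ (m + i)) + α j * Δ (l + 1) from mul_add _ _ _,
        Real.exp_add]
      linear_combination Real.exp (α j * Δ (l + 1)) * ih (by omega) d j
  refine ⟨key L hmL le_rfl, ?_⟩
  intro c v hc hv hc0
  have hv' : ∀ d j, v d j = c 0 j * ((Real.exp (α j * d) - 1) / α j) := by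
    intro d j
    rw [hv d j, key L hmL le_rfl d j, hc 0 j]
    field_simp [hα j]
  -- per-coordinate limit of v d j / d
  have hlim : ∀ j, Tendsto (fun d : ℝ => v d j / d) (𝓝[>] (0 : ℝ)) (𝓝 (c 0 j)) := by
    intro j
    have hder : HasDerivAt (fun t : ℝ => Real.exp (α j * t)) (α j) 0 := by
      have h := (Real.hasDerivAt_exp (α j * 0)).comp 0
        ((hasDerivAt_id (0 : ℝ)).const_mul (α j))
      simp only [mul_zero, Real.exp_zero, one_mul, mul_one] at h
      exact h
    have hslope : Tendsto (fun d : ℝ => (Real.exp (α j * d) - 1) / d)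
        (𝓝[≠] (0 : ℝ)) (𝓝 (α j)) := by
      have := hasDerivAt_iff_tendsto_slope.mp hder
      refine this.congr ?_
      intro d
      simp [slope_def_field]
    have hslope' : Tendsto (fun d : ℝ => (Real.exp (α j * d) - 1) / d)
        (𝓝[>] (0 : ℝ)) (𝓝 (α j)) :=
      hslope.mono_left (nhdsWithin_mono _ (fun y hy => ne_of_gt hy))
    have := hslope'.const_mul (c 0 j / α j)
    rw [div_mul_cancel₀ _ (hα j)] at this
    refine this.congr ?_
    intro d
    rw [hv' d j]
    ring
  -- limit of ‖v d‖ / d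
  have hsq : Tendsto (fun d : ℝ => ∑ j, (v d j / d) ^ 2) (𝓝[>] (0 : ℝ))
      (𝓝 (∑ j, (c 0 j) ^ 2)) :=
    tendsto_finset_sum _ (fun j _ => (hlim j).pow 2)
  have hsqrt : Tendsto (fun d : ℝ => Real.sqrt (∑ j, (v d j / d) ^ 2))
      (𝓝[>] (0 : ℝ)) (𝓝 (Real.sqrt (∑ j, (c 0 j) ^ 2))) :=
    (Real.continuous_sqrt.tendsto _).comp hsq
  have hnormc : ‖c 0‖ = Real.sqrt (∑ j, (c 0 j) ^ 2) := by
    rw [EuclideanSpace.norm_eq]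
    congr 1
    refine Finset.sum_congr rfl fun j _ => ?_
    rw [Real.norm_eq_abs, sq_abs]
  have hmain : Tendsto (fun d : ℝ => ‖v d‖ / d) (𝓝[>] (0 : ℝ)) (𝓝 ‖c 0‖) := by
    rw [hnormc]
    refine hsqrt.congr' ?_
    filter_upwards [self_mem_nhdsWithin] with d (hd : 0 < d)
    have h1 : (∑ j, (v d j / d) ^ 2) = (∑ j, (v d j) ^ 2) / d ^ 2 := by
      rw [Finset.sum_div]
      exact Finset.sum_congr rfl fun j _ => by rw [div_pow]
    rw [h1, Real.sqrt_div (Finset.sum_nonneg fun j _ => sq_nonneg _),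
      Real.sqrt_sq hd.le, EuclideanSpace.norm_eq]
    congr 2
    refine Finset.sum_congr rfl fun j _ => ?_
    rw [Real.norm_eq_abs, sq_abs]
  have hcne : ‖c 0‖ ≠ 0 := norm_ne_zero_iff.mpr hc0
  have hfin := hmain.div_const ‖c 0‖
  rw [div_self hcne] at hfin
  refine hfin.congr ?_
  intro d
  rw [div_div, mul_comm]
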